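/- Fix a finite nonempty index set Φ, a nonempty finite outcome set A, a natural number K, for every f ∈ Φ a matrix R^f ∈ ℝ^{A×K} with rows r^f(a), and a probability distribution σ̃ on A. Define the dual objective D(λ) = Σ_{f∈Φ} max_{g∈Φ} ( (Σ_{a∈A} σ̃_a r^g(a)) · λ^f ) + log Z(λ), where Z(λ) = Σ_{a∈A} exp( −Σ_{f∈Φ} r^f(a)·λ^f ). Suppose λ* ∈ (ℝ^K)^Φ attains the infimum of D. Then the Gibbs distribution σ̂ defined by σ̂_a = exp( −Σ_{f∈Φ} r^f(a)·λ*^f ) / Z(λ*) lies in the ICE polytope determined by σ̃ and maximizes the Shannon entropy H over that polytope, with H(σ̂) = D(λ*). -/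

import Mathlib

open Finset

/-- Membership in the ICE polytope determined by `σt`: `σh` is a distribution on
`A` such that for every `f ∈ Φ` there is a probability vector `η ∈ Δ(Φ)` with
`σhᵀR^f = Σ_g η_g σtᵀR^g`. -/
def memICE {Φ A : Type*} [Fintype Φ] [Fintype A] {K : ℕ}
    (R : Φ → A → Fin K → ℝ) (σt σh : A → ℝ) : Prop :=
  σh ∈ stdSimplex ℝ A ∧
    ∀ f : Φ, ∃ η : Φ → ℝ, η ∈ stdSimplex ℝ Φ ∧
      ∀ k : Fin K, ∑ a, σh a * R f a k = ∑ g, η g * ∑ a, σt a * R g a k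

/-- Shannon entropy of a distribution on a finite set, with the convention
`0 · log 0 = 0` (note `Real.log 0 = 0` in Mathlib). -/
noncomputable def shannonEntropy {A : Type*} [Fintype A] (σ : A → ℝ) : ℝ :=
  -∑ a, σ a * Real.log (σ a)

/-- The partition function of the Gibbs family associated with the regret
matrices `R` and dual multipliers `l`. -/
noncomputable def partitionFn {Φ A : Type*} [Fintype Φ] [Fintype A]
    {K : ℕ} (R : Φ → A → Fin K → ℝ) (l : Φ → Fin K → ℝ) : ℝ :=
  ∑ a, Real.exp (-∑ f : Φ, ∑ k, R f a k * l f k)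

/-- The dual objective of the MaxEnt ICE problem determined by `σt`. -/
noncomputable def dualObj {Φ A : Type*} [Fintype Φ] [Nonempty Φ] [Fintype A]
    {K : ℕ} (R : Φ → A → Fin K → ℝ) (σt : A → ℝ) (l : Φ → Fin K → ℝ) : ℝ :=
  (∑ f : Φ, univ.sup' univ_nonempty
      (fun g : Φ => ∑ k, (∑ a, σt a * R g a k) * l f k)) +
    Real.log (partitionFn R l)


lemma clm_eq_sum {K : ℕ} (ℓ : (Fin K → ℝ) →L[ℝ] ℝ) (x : Fin K → ℝ) :
    ℓ x = ∑ k, x k * ℓ (Pi.single k 1) := by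
  conv_lhs => rw [pi_eq_sum_univ x]
  rw [map_sum]
  refine Finset.sum_congr rfl fun k _ => ?_
  rw [map_smul]
  have : (fun j => if k = j then (1:ℝ) else 0) = Pi.single k 1 := by
    funext j; simp [Pi.single_apply, eq_comm]
  rw [this, smul_eq_mul]

lemma sep_lemma {ι : Type*} [Fintype ι] [Nonempty ι] {K : ℕ}
    (u : ι → Fin K → ℝ) (v : Fin K → ℝ)
    (h : ∀ d : Fin K → ℝ, ∑ k, v k * d k ≤
      univ.sup' univ_nonempty (fun i => ∑ k, u i k * d k)) :
    ∃ η : ι → ℝ, η ∈ stdSimplex ℝ ι ∧ ∀ k, v k = ∑ i, η i * u i k := by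
  classical
  set m : (ι → ℝ) → (Fin K → ℝ) := fun η => ∑ i, η i • u i with hm
  set C : Set (Fin K → ℝ) := m '' stdSimplex ℝ ι with hC
  have hconv : Convex ℝ C := by
    rintro x ⟨η₁, hη₁, rfl⟩ y ⟨η₂, hη₂, rfl⟩ a b ha hb hab
    refine ⟨a • η₁ + b • η₂, (convex_stdSimplex ℝ ι) hη₁ hη₂ ha hb hab, ?_⟩
    simp only [hm, Pi.add_apply, Pi.smul_apply, smul_eq_mul, add_smul, mul_smul,
      Finset.sum_add_distrib, Finset.smul_sum]
  have hcomp : IsCompact C := (isCompact_stdSimplex ℝ ι).image (by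
    refine continuous_finset_sum _ fun i _ => ?_
    exact (continuous_apply i).smul continuous_const)
  have hvC : v ∈ C := by
    by_contra hv
    obtain ⟨ℓ, u0, hb, hx⟩ := geometric_hahn_banach_closed_point hconv hcomp.isClosed hv
    set d : Fin K → ℝ := fun k => ℓ (Pi.single k 1) with hd
    have hrep : ∀ x : Fin K → ℝ, ℓ x = ∑ k, x k * d k := fun x => clm_eq_sum ℓ x
    have hpt : ∀ i : ι, (∑ k, u i k * d k) < u0 := by
      intro i
      have : u i ∈ C := by
        refine ⟨Pi.single i 1, single_mem_stdSimplex ℝ i, ?_⟩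
        simp [hm, Pi.single_apply, ite_smul]
      have := hb _ this
      rwa [hrep] at this
    have h1 : univ.sup' univ_nonempty (fun i => ∑ k, u i k * d k) < u0 :=
      (Finset.sup'_lt_iff _).2 fun i _ => hpt i
    have h2 := h d
    rw [← hrep] at h2
    have := hx
    rw [hrep] at this
    rw [hrep] at h2
    linarith
  obtain ⟨η, hη, hmv⟩ := hvC
  refine ⟨η, hη, fun k => ?_⟩
  rw [← hmv]
  simp [hm, Finset.sum_apply]


lemma gibbs_ineq {A : Type*} [Fintype A] (p q : A → ℝ)
    (hp : ∀ a, 0 ≤ p a) (hps : ∑ a, p a = 1)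
    (hq : ∀ a, 0 < q a) (hqs : ∑ a, q a = 1) :
    -∑ a, p a * Real.log (p a) ≤ -∑ a, p a * Real.log (q a) := by
  have key : ∑ a, p a * (Real.log (q a) - Real.log (p a)) ≤ 0 := by
    have hterm : ∀ a : A, p a * (Real.log (q a) - Real.log (p a)) ≤ q a - p a := by
      intro a
      rcases eq_or_lt_of_le (hp a) with h | h
      · simp [← h, (hq a).le]
      · rw [← Real.log_div (hq a).ne' h.ne']
        have hlog : Real.log (q a / p a) ≤ q a / p a - 1 :=
          Real.log_le_sub_one_of_pos (div_pos (hq a) h)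
        calc p a * Real.log (q a / p a) ≤ p a * (q a / p a - 1) := by
              exact mul_le_mul_of_nonneg_left hlog h.le
          _ = q a - p a := by field_simp
    calc ∑ a, p a * (Real.log (q a) - Real.log (p a)) ≤ ∑ a, (q a - p a) :=
          Finset.sum_le_sum fun a _ => hterm a
      _ = 0 := by rw [Finset.sum_sub_distrib, hps, hqs]; ring
  have : ∑ a, p a * Real.log (q a) - ∑ a, p a * Real.log (p a) ≤ 0 := by
    rw [← Finset.sum_sub_distrib]
    simpa [mul_sub] using key
  linarith

open Classical in
noncomputable def argmaxSet {Φ : Type*} [Fintype Φ] [Nonempty Φ] (c : Φ → ℝ) : Finset Φ :=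
  univ.filter (fun g => c g = univ.sup' univ_nonempty c)

lemma mem_argmaxSet {Φ : Type*} [Fintype Φ] [Nonempty Φ] {c : Φ → ℝ} {g : Φ} :
    g ∈ argmaxSet c ↔ c g = univ.sup' univ_nonempty c := by
  simp [argmaxSet]

lemma argmaxSet_nonempty {Φ : Type*} [Fintype Φ] [Nonempty Φ] (c : Φ → ℝ) :
    (argmaxSet c).Nonempty := by
  obtain ⟨g, hg, he⟩ := Finset.exists_mem_eq_sup' univ_nonempty c
  exact ⟨g, mem_argmaxSet.mpr he.symm⟩

lemma key_ineq {Φ A : Type*} [Fintype Φ] [Nonempty Φ] [Fintype A] [Nonempty A]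
    {K : ℕ} (R : Φ → A → Fin K → ℝ) (σt : A → ℝ) (lstar : Φ → Fin K → ℝ)
    (hopt : ∀ l : Φ → Fin K → ℝ, dualObj R σt lstar ≤ dualObj R σt l)
    (f : Φ) (d : Fin K → ℝ) :
    ∑ k, (∑ a, (Real.exp (-∑ f' : Φ, ∑ k', R f' a k' * lstar f' k') / partitionFn R lstar)
        * R f a k) * d k
      ≤ (argmaxSet (fun g => ∑ k, (∑ a, σt a * R g a k) * lstar f k)).sup'
          (argmaxSet_nonempty _) (fun g => ∑ k, (∑ a, σt a * R g a k) * d k) := by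
  classical
  set u : Φ → Fin K → ℝ := fun g k => ∑ a, σt a * R g a k with hu
  set c : Φ → ℝ := fun g => ∑ k, u g k * lstar f k with hc
  set b : Φ → ℝ := fun g => ∑ k, u g k * d k with hb
  set M : ℝ := univ.sup' univ_nonempty c with hM
  set G : Finset Φ := argmaxSet c with hGdef
  have hGne : G.Nonempty := argmaxSet_nonempty c
  set B : ℝ := G.sup' hGne b with hB
  set s : A → ℝ := fun a => ∑ f' : Φ, ∑ k', R f' a k' * lstar f' k' with hs
  set w : A → ℝ := fun a => ∑ k, R f a k * d k with hw
  set Zt : ℝ → ℝ := fun t => ∑ a, Real.exp (-(s a + t * w a)) with hZt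
  have hZtpos : ∀ t, 0 < Zt t := fun t =>
    Finset.sum_pos (fun a _ => Real.exp_pos _) univ_nonempty
  set L : ℝ → ℝ := fun t => Real.log (Zt t) with hL
  set lt : ℝ → Φ → Fin K → ℝ :=
    fun t f' k => lstar f' k + (if f' = f then t * d k else 0) with hlt
  -- the dual objective along the perturbation
  have hD : ∀ t, dualObj R σt (lt t) =
      ((∑ f' ∈ univ.erase f, univ.sup' univ_nonempty
          (fun g => ∑ k, u g k * lstar f' k)) +
        univ.sup' univ_nonempty (fun g => c g + t * b g)) + L t := by
    intro t
    have hexp : ∀ a, ∑ f' : Φ, ∑ k, R f' a k * lt t f' k = s a + t * w a := by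
      intro a
      have : ∀ f' : Φ, ∑ k, R f' a k * lt t f' k =
          (∑ k, R f' a k * lstar f' k) + (if f' = f then t * w a else 0) := by
        intro f'
        by_cases h : f' = f
        · subst h
          have h1 : (if f' = f' then t * w a else 0) = ∑ k, t * (R f' a k * d k) := by
            rw [if_pos rfl]; simp only [hw, Finset.mul_sum]
          rw [h1, ← Finset.sum_add_distrib]
          refine Finset.sum_congr rfl fun k _ => ?_
          simp only [hlt, if_pos]
          ring
        · simp [hlt, h]
      rw [Finset.sum_congr rfl fun f' _ => this f', Finset.sum_add_distrib]
      congr 1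
      rw [Finset.sum_ite_eq' univ f (fun _ => t * w a)]
      simp
    have hsup : ∀ f' : Φ, (fun g => ∑ k, u g k * lt t f' k) =
        (fun g => (∑ k, u g k * lstar f' k) + (if f' = f then t * b g else 0)) := by
      intro f'
      funext g
      by_cases h : f' = f
      · subst h
        have h1 : (if f' = f' then t * b g else 0) = ∑ k, t * (u g k * d k) := by
          rw [if_pos rfl]; simp only [hb, Finset.mul_sum]
        rw [h1, ← Finset.sum_add_distrib]
        refine Finset.sum_congr rfl fun k _ => ?_
        simp only [hlt, if_pos]
        ring
      · simp [hlt, h]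
    have hZ : partitionFn R (lt t) = Zt t := by
      unfold partitionFn
      exact Finset.sum_congr rfl fun a _ => by rw [hexp a]
    unfold dualObj
    rw [hZ]
    congr 1
    rw [← Finset.sum_erase_add univ _ (mem_univ f)]
    congr 1
    · refine Finset.sum_congr rfl fun f' hf' => ?_
      have hne : f' ≠ f := (Finset.mem_erase.mp hf').1
      rw [hsup f']
      refine Finset.sup'_congr _ rfl fun g _ => ?_
      simp [hne]
    · rw [hsup f]
      refine Finset.sup'_congr _ rfl fun g _ => ?_
      simp
      rfl
  have hl0 : dualObj R σt lstar =
      ((∑ f' ∈ univ.erase f, univ.sup' univ_nonempty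
          (fun g => ∑ k, u g k * lstar f' k)) + M) + L 0 := by
    have h0 : lt 0 = lstar := by
      funext f' k; simp [hlt]
    have := hD 0
    rw [h0] at this
    rw [this]
    have h2 : univ.sup' univ_nonempty (fun g => c g + 0 * b g) = M := by
      rw [hM]; exact Finset.sup'_congr _ rfl fun g _ => by ring
    rw [h2]
  have hle : ∀ t, M + L 0 ≤ univ.sup' univ_nonempty (fun g => c g + t * b g) + L t := by
    intro t
    have h1 := hopt (lt t)
    rw [hD t, hl0] at h1
    linarith
  -- eventual bound on the sup'
  have hev : ∀ᶠ t in nhdsWithin (0:ℝ) (Set.Ioi 0),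
      univ.sup' univ_nonempty (fun g => c g + t * b g) ≤ M + t * B := by
    have hall : ∀ g : Φ, ∀ᶠ t in nhdsWithin (0:ℝ) (Set.Ioi 0),
        c g + t * b g ≤ M + t * B := by
      intro g
      by_cases hg : g ∈ G
      · have hcg : c g = M := mem_argmaxSet.mp hg
        have hbB : b g ≤ B := Finset.le_sup' b hg
        filter_upwards [self_mem_nhdsWithin] with t ht
        have ht' : (0:ℝ) < t := ht
        nlinarith
      · have hcg : c g < M :=
          lt_of_le_of_ne (Finset.le_sup' c (mem_univ g)) (by rw [hGdef, mem_argmaxSet] at hg; exact hg)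
        have hεpos : 0 < (M - c g) / (|b g - B| + 1) :=
          div_pos (by linarith) (by positivity)
        filter_upwards [Ioo_mem_nhdsGT_of_mem (Set.left_mem_Ico.mpr hεpos)] with t ht
        obtain ⟨ht0, htε⟩ := ht
        have h1 : t * (b g - B) ≤ t * |b g - B| :=
          mul_le_mul_of_nonneg_left (le_abs_self _) ht0.le
        have h2 : t * |b g - B| ≤ ((M - c g) / (|b g - B| + 1)) * (|b g - B| + 1) := by
          have hab : (0:ℝ) ≤ |b g - B| := abs_nonneg _
          nlinarith
        have h3 : ((M - c g) / (|b g - B| + 1)) * (|b g - B| + 1) = M - c g := by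
          field_simp
        nlinarith
    filter_upwards [Filter.eventually_all.mpr hall] with t ht
    exact Finset.sup'_le _ _ fun g _ => ht g
  -- derivative of L at 0
  have hLd : HasDerivAt L ((∑ a, -w a * Real.exp (-(s a + 0 * w a))) / Zt 0) 0 := by
    have hZd : HasDerivAt Zt (∑ a, -w a * Real.exp (-(s a + 0 * w a))) 0 := by
      refine HasDerivAt.fun_sum fun a _ => ?_
      have h1 : HasDerivAt (fun t : ℝ => -(s a + t * w a)) (-w a) 0 := by
        exact (by simpa using (((hasDerivAt_id (0:ℝ)).mul_const (w a)).const_add (s a)).neg :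
          HasDerivAt (-fun x => s a + x * w a) (-w a) 0)
      simpa [mul_comm] using h1.exp
    exact hZd.log (hZtpos 0).ne'
  have htend : Filter.Tendsto (slope L 0) (nhdsWithin (0:ℝ) (Set.Ioi 0))
      (nhds ((∑ a, -w a * Real.exp (-(s a + 0 * w a))) / Zt 0)) :=
    (hasDerivAt_iff_tendsto_slope.mp hLd).mono_left
      (nhdsWithin_mono _ fun t ht => ne_of_gt ht)
  have hge : -B ≤ (∑ a, -w a * Real.exp (-(s a + 0 * w a))) / Zt 0 := by
    refine ge_of_tendsto htend ?_
    filter_upwards [hev, self_mem_nhdsWithin] with t h1 h2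
    have ht : (0:ℝ) < t := h2
    have h3 := hle t
    have h4 : -(t * B) ≤ L t - L 0 := by linarith
    have hst : slope L 0 t = (L t - L 0) / t := by
      simp [slope_def_field]
    rw [hst, le_div_iff₀ ht]
    linarith
  -- convert to the goal
  have hZ0 : Zt 0 = partitionFn R lstar := by
    unfold partitionFn
    refine Finset.sum_congr rfl fun a _ => ?_
    norm_num
    rfl
  have hfin : ∑ a, (Real.exp (-(s a)) / partitionFn R lstar) * w a ≤ B := by
    have : (∑ a, -w a * Real.exp (-(s a + 0 * w a))) / Zt 0
        = -∑ a, (Real.exp (-(s a)) / partitionFn R lstar) * w a := by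
      rw [hZ0, Finset.sum_div, ← Finset.sum_neg_distrib]
      refine Finset.sum_congr rfl fun a _ => ?_
      rw [zero_mul, add_zero]
      ring
    rw [this] at hge
    linarith
  show ∑ k, (∑ a, (Real.exp (-s a) / partitionFn R lstar) * R f a k) * d k ≤ G.sup' hGne b
  calc ∑ k, (∑ a, (Real.exp (-s a) / partitionFn R lstar) * R f a k) * d k
      = ∑ a, (Real.exp (-(s a)) / partitionFn R lstar) * w a := by
        simp only [Finset.sum_mul]
        rw [Finset.sum_comm]
        refine Finset.sum_congr rfl fun a _ => ?_
        simp only [hw, Finset.mul_sum]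
        exact Finset.sum_congr rfl fun k _ => by ring
    _ ≤ B := hfin

lemma exists_eta {Φ A : Type*} [Fintype Φ] [Nonempty Φ] [Fintype A] [Nonempty A]
    {K : ℕ} (R : Φ → A → Fin K → ℝ) (σt : A → ℝ) (lstar : Φ → Fin K → ℝ)
    (hopt : ∀ l : Φ → Fin K → ℝ, dualObj R σt lstar ≤ dualObj R σt l)
    (f : Φ) :
    ∃ η : Φ → ℝ, η ∈ stdSimplex ℝ Φ ∧
      (∀ g : Φ, η g ≠ 0 →
        g ∈ argmaxSet (fun g => ∑ k, (∑ a, σt a * R g a k) * lstar f k)) ∧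
      ∀ k, ∑ a, (Real.exp (-∑ f' : Φ, ∑ k', R f' a k' * lstar f' k') / partitionFn R lstar)
          * R f a k = ∑ g, η g * ∑ a, σt a * R g a k := by
  classical
  set G : Finset Φ :=
    argmaxSet (fun g => ∑ k, (∑ a, σt a * R g a k) * lstar f k) with hGdef
  have hGne : G.Nonempty := argmaxSet_nonempty _
  haveI : Nonempty {g // g ∈ G} := ⟨⟨hGne.choose, hGne.choose_spec⟩⟩
  obtain ⟨ηs, hηsS, hηs⟩ := sep_lemma
    (fun (i : {g // g ∈ G}) k => ∑ a, σt a * R (i : Φ) a k)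
    (fun k => ∑ a, (Real.exp (-∑ f' : Φ, ∑ k', R f' a k' * lstar f' k')
      / partitionFn R lstar) * R f a k)
    (by
      intro d
      refine (key_ineq R σt lstar hopt f d).trans ?_
      refine Finset.sup'_le _ _ fun g hg => ?_
      exact Finset.le_sup' (fun (i : {g // g ∈ G}) => ∑ k, (∑ a, σt a * R (i : Φ) a k) * d k)
        (mem_univ (⟨g, hg⟩ : {g // g ∈ G})))
  refine ⟨fun g => if h : g ∈ G then ηs ⟨g, h⟩ else 0, ⟨?_, ?_⟩, ?_, ?_⟩
  · intro g
    by_cases h : g ∈ G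
    · simpa [h] using hηsS.1 ⟨g, h⟩
    · simp [h]
  · rw [← Finset.sum_subset (Finset.subset_univ G) (fun g _ hg => dif_neg hg),
      ← Finset.sum_coe_sort G]
    rw [← hηsS.2]
    exact Finset.sum_congr rfl fun i _ => by simp
  · intro g hg
    by_contra h
    exact hg (dif_neg h)
  · intro k
    rw [hηs k]
    rw [← Finset.sum_subset (Finset.subset_univ G)
      (fun g _ hg => by simp [hg]),
      ← Finset.sum_coe_sort G]
    exact Finset.sum_congr rfl fun i _ => by simp

lemma weighted_exchange {Φ : Type*} [Fintype Φ] {K : ℕ}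
    (x : Φ → Fin K → ℝ) (η : Φ → ℝ) (lv : Fin K → ℝ) :
    ∑ k, (∑ g, η g * x g k) * lv k = ∑ g, η g * ∑ k, x g k * lv k := by
  simp only [Finset.sum_mul, Finset.mul_sum]
  rw [Finset.sum_comm]
  exact Finset.sum_congr rfl fun g _ => Finset.sum_congr rfl fun k _ => by ring

lemma sum_s_exchange {Φ A : Type*} [Fintype Φ] [Fintype A] {K : ℕ}
    (R : Φ → A → Fin K → ℝ) (lstar : Φ → Fin K → ℝ) (p : A → ℝ) :
    ∑ a, p a * (∑ f' : Φ, ∑ k', R f' a k' * lstar f' k')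
      = ∑ f' : Φ, ∑ k, (∑ a, p a * R f' a k) * lstar f' k := by
  simp only [Finset.mul_sum]
  rw [Finset.sum_comm]
  refine Finset.sum_congr rfl fun f' _ => ?_
  rw [Finset.sum_comm]
  refine Finset.sum_congr rfl fun k _ => ?_
  rw [Finset.sum_mul]
  exact Finset.sum_congr rfl fun a _ => by ring


/-- **Lemma 4 (primal recovery from a dual solution).**
If the dual multipliers `lstar` attain the infimum of the dual objective, then
the Gibbs distribution `σh_a = exp(−Σ_f r^f(a)·λ*^f)/Z(λ*)` lies in the ICE
polytope determined by `σt`, maximizes the Shannon entropy over that polytope,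
and its entropy equals the optimal dual value `D(λ*)`. -/
theorem maxEntICE_primal_recovery
    {Φ A : Type*} [Fintype Φ] [Nonempty Φ] [Fintype A] [Nonempty A]
    {K : ℕ} (R : Φ → A → Fin K → ℝ)
    (σt : A → ℝ) (hσt : σt ∈ stdSimplex ℝ A)
    (lstar : Φ → Fin K → ℝ)
    (hopt : ∀ l : Φ → Fin K → ℝ, dualObj R σt lstar ≤ dualObj R σt l)
    (σh : A → ℝ)
    (hσh : σh = fun a =>
      Real.exp (-∑ f : Φ, ∑ k, R f a k * lstar f k) / partitionFn R lstar) :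
    memICE R σt σh ∧
      (∀ σ' : A → ℝ, memICE R σt σ' → shannonEntropy σ' ≤ shannonEntropy σh) ∧
      shannonEntropy σh = dualObj R σt lstar := by
  classical
  have hZpos : 0 < partitionFn R lstar :=
    Finset.sum_pos (fun a _ => Real.exp_pos _) univ_nonempty
  have hq : ∀ a, σh a =
      Real.exp (-∑ f' : Φ, ∑ k', R f' a k' * lstar f' k') / partitionFn R lstar :=
    fun a => by rw [hσh]
  have hqpos : ∀ a, 0 < σh a := fun a => by
    rw [hq a]; exact div_pos (Real.exp_pos _) hZpos
  have hqsum : ∑ a, σh a = 1 := by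
    rw [Finset.sum_congr rfl fun a _ => hq a, ← Finset.sum_div]
    exact div_self hZpos.ne'
  have hlog : ∀ a, Real.log (σh a) =
      (-∑ f' : Φ, ∑ k', R f' a k' * lstar f' k') - Real.log (partitionFn R lstar) :=
    fun a => by rw [hq a, Real.log_div (Real.exp_pos _).ne' hZpos.ne', Real.log_exp]
  choose η hηS hηsupp hηk using fun f => exists_eta R σt lstar hopt f
  -- entropy of any distribution vs cross entropy with σh
  have hcross : ∀ p : A → ℝ, (∑ a, p a = 1) →
      -∑ a, p a * Real.log (σh a) =
        (∑ f' : Φ, ∑ k, (∑ a, p a * R f' a k) * lstar f' k)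
          + Real.log (partitionFn R lstar) := by
    intro p hps
    have h1 : ∀ a, p a * Real.log (σh a) =
        -(p a * (∑ f' : Φ, ∑ k', R f' a k' * lstar f' k'))
          - p a * Real.log (partitionFn R lstar) := fun a => by rw [hlog a]; ring
    rw [Finset.sum_congr rfl fun a _ => h1 a, Finset.sum_sub_distrib,
      Finset.sum_neg_distrib, ← Finset.sum_mul, hps, one_mul, sum_s_exchange]
    ring
  -- the ICE membership
  have hICE : memICE R σt σh := by
    refine ⟨⟨fun a => (hqpos a).le, hqsum⟩, fun f => ⟨η f, hηS f, fun k => ?_⟩⟩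
    rw [Finset.sum_congr rfl fun a _ => by rw [hq a]]
    exact hηk f k
  -- per-f bound used twice
  have hMf : ∀ (f : Φ) (w : Φ → ℝ), w ∈ stdSimplex ℝ Φ →
      ∑ g, w g * ∑ k, (∑ a, σt a * R g a k) * lstar f k ≤
        univ.sup' univ_nonempty
          (fun g => ∑ k, (∑ a, σt a * R g a k) * lstar f k) := by
    intro f w hw
    calc ∑ g, w g * ∑ k, (∑ a, σt a * R g a k) * lstar f k
        ≤ ∑ g, w g * univ.sup' univ_nonempty
            (fun g => ∑ k, (∑ a, σt a * R g a k) * lstar f k) :=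
          Finset.sum_le_sum fun g _ => mul_le_mul_of_nonneg_left
            (Finset.le_sup'
              (fun g => ∑ k, (∑ a, σt a * R g a k) * lstar f k)
              (mem_univ g)) (hw.1 g)
      _ = _ := by rw [← Finset.sum_mul, hw.2, one_mul]
  -- entropy of σh equals the dual objective
  have hent : shannonEntropy σh = dualObj R σt lstar := by
    unfold shannonEntropy dualObj
    have h0 : -∑ a, σh a * Real.log (σh a) = -∑ a, σh a * Real.log (σh a) := rfl
    rw [show ∑ a, σh a * Real.log (σh a) = -(-∑ a, σh a * Real.log (σh a)) by ring]
    rw [neg_neg, hcross σh hqsum]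
    congr 1
    refine Finset.sum_congr rfl fun f _ => ?_
    have e1 : ∀ k, ∑ a, σh a * R f a k = ∑ g, η f g * ∑ a, σt a * R g a k := by
      intro k
      rw [Finset.sum_congr rfl fun a _ => by rw [hq a]]
      exact hηk f k
    rw [Finset.sum_congr rfl fun k _ => by rw [e1 k], weighted_exchange]
    have e2 : ∀ g, η f g * (∑ k, (∑ a, σt a * R g a k) * lstar f k) =
        η f g * univ.sup' univ_nonempty
          (fun g => ∑ k, (∑ a, σt a * R g a k) * lstar f k) := by
      intro g
      by_cases h : η f g = 0
      · rw [h, zero_mul, zero_mul]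
      · rw [mem_argmaxSet.mp (hηsupp f g h)]
    rw [Finset.sum_congr rfl fun g _ => e2 g, ← Finset.sum_mul, (hηS f).2, one_mul]
  refine ⟨hICE, fun σ' hσ' => ?_, hent⟩
  obtain ⟨hσ'S, hσ'f⟩ := hσ'
  have hg1 : shannonEntropy σ' ≤ -∑ a, σ' a * Real.log (σh a) :=
    gibbs_ineq σ' σh hσ'S.1 hσ'S.2 hqpos hqsum
  rw [hcross σ' hσ'S.2] at hg1
  have hg2 : ∑ f : Φ, ∑ k, (∑ a, σ' a * R f a k) * lstar f k ≤
      ∑ f : Φ, univ.sup' univ_nonempty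
        (fun g => ∑ k, (∑ a, σt a * R g a k) * lstar f k) := by
    refine Finset.sum_le_sum fun f _ => ?_
    obtain ⟨η', hη'S, hη'k⟩ := hσ'f f
    rw [Finset.sum_congr rfl fun k _ => by rw [hη'k k], weighted_exchange]
    exact hMf f η' hη'S
  rw [hent]
  unfold dualObj
  linarith
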